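/- Let C be a triangulated category endowed with a weight structure w and an adjacent t-structure t (meaning C_{w≥0} = C_{t≥0}), and let m ≤ n. Then the pair (C_{w∉[m,n]}, C[m,n]) is a torsion theory: C_{w∉[m,n]}^⊥ = C[m,n], ^⊥(C[m,n]) = C_{w∉[m,n]}, and every object M fits into a distinguished triangle L → M → R → L[1] with L ∈ C_{w∉[m,n]} and R ∈ C[m,n]. -/

import Mathlib

open CategoryTheory CategoryTheory.Limits CategoryTheory.Pretriangulated Opposite

universe v u

variable (C : Type u) [Category.{v} C] [Preadditive C] [HasZeroObject C]
  [HasShift C ℤ] [∀ n : ℤ, (shiftFunctor C n).Additive] [Pretriangulated C]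

/-- A weight structure on the triangulated category `C`. -/
structure WeightStructure where
  /-- the class `C_{w ≤ n}` -/
  le : ℤ → Set C
  /-- the class `C_{w ≥ n}` -/
  ge : ℤ → Set C
  le_iso_closed : ∀ (n : ℤ) (X Y : C), (X ≅ Y) → X ∈ le n → Y ∈ le n
  ge_iso_closed : ∀ (n : ℤ) (X Y : C), (X ≅ Y) → X ∈ ge n → Y ∈ ge n
  le_retract : ∀ (n : ℤ) (X Y : C) (a : X ⟶ Y) (b : Y ⟶ X),
    a ≫ b = 𝟙 X → Y ∈ le n → X ∈ le n
  ge_retract : ∀ (n : ℤ) (X Y : C) (a : X ⟶ Y) (b : Y ⟶ X),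
    a ≫ b = 𝟙 X → Y ∈ ge n → X ∈ ge n
  le_shift : ∀ (n k : ℤ) (X : C), X ∈ le n → X⟦k⟧ ∈ le (n + k)
  ge_shift : ∀ (n k : ℤ) (X : C), X ∈ ge n → X⟦k⟧ ∈ ge (n + k)
  le_mono : ∀ n : ℤ, le n ⊆ le (n + 1)
  ge_anti : ∀ n : ℤ, ge (n + 1) ⊆ ge n
  orth : ∀ (n : ℤ) (X Y : C), X ∈ le n → Y ∈ ge (n + 1) → ∀ f : X ⟶ Y, f = 0
  decomp : ∀ (X : C) (k : ℤ), ∃ (A B : C) (x : A ⟶ X) (y : X ⟶ B) (δ : B ⟶ A⟦(1 : ℤ)⟧),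
    (Triangle.mk x y δ ∈ distTriang C) ∧ A ∈ le k ∧ B ∈ ge (k + 1)

variable {C}

/-- `(A, B, x, y)` is a `k`-weight decomposition of `X`. -/
def WeightStructure.IsWeightDecomp (w : WeightStructure C) (k : ℤ) {X : C} (A B : C)
    (x : A ⟶ X) (y : X ⟶ B) : Prop :=
  (∃ δ : B ⟶ A⟦(1 : ℤ)⟧, Triangle.mk x y δ ∈ distTriang C) ∧ A ∈ w.le k ∧ B ∈ w.ge (k + 1)

/-- `g : M ⟶ N` kills weights `m, …, n`. -/
def WeightStructure.KillsWeights (w : WeightStructure C) (m n : ℤ) {M N : C}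
    (g : M ⟶ N) : Prop :=
  ∃ (A A' B B' : C) (x : A ⟶ M) (x' : M ⟶ A') (y' : B ⟶ N) (y : N ⟶ B'),
    w.IsWeightDecomp n A A' x x' ∧ w.IsWeightDecomp (m - 1) B B' y' y ∧
      x ≫ g ≫ y = 0

/-- The class of objects of `C` without weights `m, …, n`. -/
def WeightStructure.without (w : WeightStructure C) (m n : ℤ) : Set C :=
  {M : C | w.KillsWeights m n (𝟙 M)}


/-- A `t`-structure on the triangulated category `C` (cohomological conventions,
with `le n = C_{t ≤ n}` and `ge n = C_{t ≥ n}`). -/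
structure TStructure (C : Type u) [Category.{v} C] [Preadditive C] [HasZeroObject C]
    [HasShift C ℤ] [∀ n : ℤ, (shiftFunctor C n).Additive] [Pretriangulated C] where
  le : ℤ → Set C
  ge : ℤ → Set C
  le_iso_closed : ∀ (n : ℤ) (X Y : C), (X ≅ Y) → X ∈ le n → Y ∈ le n
  ge_iso_closed : ∀ (n : ℤ) (X Y : C), (X ≅ Y) → X ∈ ge n → Y ∈ ge n
  le_shift : ∀ (n k : ℤ) (X : C), X ∈ le n → X⟦k⟧ ∈ le (n + k)
  ge_shift : ∀ (n k : ℤ) (X : C), X ∈ ge n → X⟦k⟧ ∈ ge (n + k)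
  le_mono : ∀ n : ℤ, le n ⊆ le (n + 1)
  ge_anti : ∀ n : ℤ, ge (n + 1) ⊆ ge n
  orth : ∀ (n : ℤ) (X Y : C), X ∈ ge (n + 1) → Y ∈ le n → ∀ f : X ⟶ Y, f = 0
  decomp : ∀ (X : C) (n : ℤ), ∃ (A B : C) (x : A ⟶ X) (y : X ⟶ B) (δ : B ⟶ A⟦(1 : ℤ)⟧),
    (Triangle.mk x y δ ∈ distTriang C) ∧ A ∈ ge (n + 1) ∧ B ∈ le n

/-- The class of objects right-orthogonal to `S`. -/
def rightOrth (S : Set C) : Set C := {Y : C | ∀ X ∈ S, ∀ f : X ⟶ Y, f = 0}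

/-- The class of objects left-orthogonal to `S`. -/
def leftOrth (S : Set C) : Set C := {X : C | ∀ Y ∈ S, ∀ f : X ⟶ Y, f = 0}


open CategoryTheory.Category CategoryTheory.Preadditive

section AuxiliaryLemmas

namespace TStructure

lemma le_mono' (t : TStructure C) {a b : ℤ} (h : a ≤ b) : t.le a ⊆ t.le b :=
  Int.le_induction (motive := fun b _ => t.le a ⊆ t.le b) subset_rfl
    (fun k _ ih => ih.trans (t.le_mono k)) b h

lemma ge_anti' (t : TStructure C) {a b : ℤ} (h : a ≤ b) : t.ge b ⊆ t.ge a :=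
  Int.le_induction (motive := fun b _ => t.ge b ⊆ t.ge a) subset_rfl
    (fun k _ ih => (t.ge_anti k).trans ih) b h

/-- If `Y` receives no nonzero maps from `t.ge (n+1)` then `Y ∈ t.le n`. -/
lemma mem_le_of_orth (t : TStructure C) {n : ℤ} {Y : C}
    (h : ∀ X ∈ t.ge (n + 1), ∀ f : X ⟶ Y, f = 0) : Y ∈ t.le n := by
  obtain ⟨P, Q, α, β, δ, hT, hP, hQ⟩ := t.decomp Y n
  have hα : α = 0 := h P hP α
  have h1 : IsZero P := by
    rw [IsZero.iff_id_eq_zero]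
    obtain ⟨g, hg⟩ := Triangle.coyoneda_exact₂ _
      (inv_rot_of_distTriang _ hT) (𝟙 P) (by exact (Category.id_comp α).trans hα)
    have hg0 : g = 0 := t.orth n P (Q⟦(-1 : ℤ)⟧) hP
      (t.le_mono' (by omega) (t.le_shift n (-1) Q hQ)) g
    subst hg0; exact hg.trans zero_comp
  have h2 : IsIso (Triangle.mk α β δ).mor₂ := (Triangle.isZero₁_iff_isIso₂ _ hT).1 h1
  have h3 : IsIso β := h2
  exact t.le_iso_closed n Q Y (asIso β).symm hQ

/-- If `Y` admits no nonzero maps to `t.le (m-1)` then `Y ∈ t.ge m`. -/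
lemma mem_ge_of_orth (t : TStructure C) {m : ℤ} {Y : C}
    (h : ∀ W ∈ t.le (m - 1), ∀ f : Y ⟶ W, f = 0) : Y ∈ t.ge m := by
  obtain ⟨P, Q, α, β, δ, hT, hP, hQ⟩ := t.decomp Y (m - 1)
  have hP' : P ∈ t.ge m := by
    have : m - 1 + 1 = m := by omega
    rwa [this] at hP
  have hβ : β = 0 := h Q hQ β
  have h1 : IsZero Q := by
    rw [IsZero.iff_id_eq_zero]
    obtain ⟨g, hg⟩ := Triangle.yoneda_exact₃ _ hT (𝟙 Q) (by exact (Category.comp_id β).trans hβ)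
    have hg0 : g = 0 := t.orth (m - 1) (P⟦(1 : ℤ)⟧) Q
      (t.ge_anti' (by omega) (t.ge_shift m 1 P hP')) hQ g
    subst hg0; exact hg.trans comp_zero
  have h2 : IsIso (Triangle.mk α β δ).mor₁ := (Triangle.isZero₃_iff_isIso₁ _ hT).1 h1
  have h3 : IsIso α := h2
  exact t.ge_iso_closed m P Y (asIso α) hP'

/-- The classes `t.ge k` are closed under extensions. -/
lemma ge_ext (t : TStructure C) {k : ℤ} (T : Triangle C) (hT : T ∈ distTriang C)
    (h1 : T.obj₁ ∈ t.ge k) (h3 : T.obj₃ ∈ t.ge k) : T.obj₂ ∈ t.ge k := by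
  apply t.mem_ge_of_orth
  intro W hW f
  have h1' : T.obj₁ ∈ t.ge (k - 1 + 1) := by
    have : k - 1 + 1 = k := by omega
    rwa [this]
  have h3' : T.obj₃ ∈ t.ge (k - 1 + 1) := by
    have : k - 1 + 1 = k := by omega
    rwa [this]
  have hm : T.mor₁ ≫ f = 0 := t.orth (k - 1) T.obj₁ W h1' hW _
  obtain ⟨g, hg⟩ := Triangle.yoneda_exact₂ _ hT f hm
  have hg0 : g = 0 := t.orth (k - 1) T.obj₃ W h3' hW g
  rw [hg, hg0, comp_zero]

end TStructure

namespace WeightStructure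

lemma le_mono' (w : WeightStructure C) {a b : ℤ} (h : a ≤ b) : w.le a ⊆ w.le b :=
  Int.le_induction (motive := fun b _ => w.le a ⊆ w.le b) subset_rfl
    (fun k _ ih => ih.trans (w.le_mono k)) b h

lemma ge_anti' (w : WeightStructure C) {a b : ℤ} (h : a ≤ b) : w.ge b ⊆ w.ge a :=
  Int.le_induction (motive := fun b _ => w.ge b ⊆ w.ge a) subset_rfl
    (fun k _ ih => (w.ge_anti k).trans ih) b h

/-- If `Y` admits no nonzero maps to `w.ge (n+1)` then `Y ∈ w.le n`. -/
lemma mem_le_of_orth (w : WeightStructure C) {n : ℤ} {Y : C}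
    (h : ∀ Z ∈ w.ge (n + 1), ∀ f : Y ⟶ Z, f = 0) : Y ∈ w.le n := by
  obtain ⟨A, B, x, y, δ, hT, hA, hB⟩ := w.decomp Y n
  have hy : y = 0 := h B hB y
  obtain ⟨g, hg⟩ := Triangle.coyoneda_exact₂ _ hT (𝟙 Y) (by exact (Category.id_comp y).trans hy)
  exact w.le_retract n Y A g x hg.symm hA

/-- If `Y` receives no nonzero maps from `w.le (m-1)` then `Y ∈ w.ge m`. -/
lemma mem_ge_of_orth (w : WeightStructure C) {m : ℤ} {Y : C}
    (h : ∀ Z ∈ w.le (m - 1), ∀ f : Z ⟶ Y, f = 0) : Y ∈ w.ge m := by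
  obtain ⟨A, B, x, y, δ, hT, hA, hB⟩ := w.decomp Y (m - 1)
  have hB' : B ∈ w.ge m := by
    have : m - 1 + 1 = m := by omega
    rwa [this] at hB
  have hx : x = 0 := h A hA x
  obtain ⟨g, hg⟩ := Triangle.yoneda_exact₂ _ hT (𝟙 Y) (by exact (Category.comp_id x).trans hx)
  exact w.ge_retract m Y B y g hg.symm hB'

end WeightStructure

/-- Adjacency propagates to all levels: `w.ge k = t.ge k`. -/
lemma adj_ge_eq (w : WeightStructure C) (t : TStructure C)
    (adj : w.ge 0 = t.ge 0) (k : ℤ) : w.ge k = t.ge k := by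
  have e : ∀ X : C, ((X⟦-k⟧)⟦k⟧ ≅ X) := fun X =>
    (shiftFunctorCompIsoId C (-k) k (by omega)).app X
  ext X
  constructor
  · intro hX
    have h1 : X⟦-k⟧ ∈ w.ge (k + -k) := w.ge_shift k (-k) X hX
    rw [show k + -k = 0 by omega] at h1
    rw [adj] at h1
    have h2 : (X⟦-k⟧)⟦k⟧ ∈ t.ge (0 + k) := t.ge_shift 0 k _ h1
    rw [zero_add] at h2
    exact t.ge_iso_closed k _ X (e X) h2
  · intro hX
    have h1 : X⟦-k⟧ ∈ t.ge (k + -k) := t.ge_shift k (-k) X hX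
    rw [show k + -k = 0 by omega] at h1
    rw [← adj] at h1
    have h2 : (X⟦-k⟧)⟦k⟧ ∈ w.ge (0 + k) := w.ge_shift 0 k _ h1
    rw [zero_add] at h2
    exact w.ge_iso_closed k _ X (e X) h2

/-- Objects of `w.ge (n+1)` have no weights `m, …, n`. -/
lemma WeightStructure.mem_without_of_ge (w : WeightStructure C) {m n : ℤ} {M : C}
    (hM : M ∈ w.ge (n + 1)) : M ∈ w.without m n := by
  obtain ⟨A, A', x, x', δ₁, hT1, hA, hA'⟩ := w.decomp M n
  obtain ⟨B, B', y', y, δ₂, hT2, hB, hB'⟩ := w.decomp M (m - 1)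
  refine ⟨A, A', B, B', x, x', y', y, ⟨⟨δ₁, hT1⟩, hA, hA'⟩, ⟨⟨δ₂, hT2⟩, hB, hB'⟩, ?_⟩
  have hx : x = 0 := w.orth n A M hA hM x
  rw [hx, zero_comp]

/-- Objects of `w.le (m-1)` have no weights `m, …, n`. -/
lemma WeightStructure.mem_without_of_le (w : WeightStructure C) {m n : ℤ} {M : C}
    (hM : M ∈ w.le (m - 1)) : M ∈ w.without m n := by
  obtain ⟨A, A', x, x', δ₁, hT1, hA, hA'⟩ := w.decomp M n
  obtain ⟨B, B', y', y, δ₂, hT2, hB, hB'⟩ := w.decomp M (m - 1)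
  refine ⟨A, A', B, B', x, x', y', y, ⟨⟨δ₁, hT1⟩, hA, hA'⟩, ⟨⟨δ₂, hT2⟩, hB, hB'⟩, ?_⟩
  have hy : y = 0 := w.orth (m - 1) M B' hM hB' y
  rw [hy, comp_zero, comp_zero]

/-- Any map from an object without weights `m, …, n` to `C[m,n]` vanishes. -/
lemma without_hom_zero (w : WeightStructure C) (t : TStructure C)
    (adj : w.ge 0 = t.ge 0) {m n : ℤ} {M Y : C} (hM : M ∈ w.without m n)
    (hY1 : Y ∈ t.le n) (hY2 : Y ∈ t.ge m) (f : M ⟶ Y) : f = 0 := by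
  obtain ⟨A, A', B, B', x, x', y', y, ⟨⟨δ₁, hT1⟩, hA, hA'⟩, ⟨⟨δ₂, hT2⟩, hB, hB'⟩, hxy⟩ := hM
  rw [Category.id_comp] at hxy
  obtain ⟨g, hg⟩ : ∃ g : A ⟶ B, x = g ≫ y' := Triangle.coyoneda_exact₂ _ hT2 x hxy
  have hYw : Y ∈ w.ge (m - 1 + 1) := by
    rw [show m - 1 + 1 = m by omega, adj_ge_eq w t adj]
    exact hY2
  have hyf : y' ≫ f = 0 := w.orth (m - 1) B Y hB hYw _
  have hxf : x ≫ f = 0 := by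
    have : x ≫ f = g ≫ (y' ≫ f) := by rw [hg]; exact Category.assoc _ _ _
    rw [this, hyf, comp_zero]
  obtain ⟨h, hh⟩ := Triangle.yoneda_exact₂ _ hT1 f hxf
  have hA't : A' ∈ t.ge (n + 1) := by
    rw [← adj_ge_eq w t adj]
    exact hA'
  have hh0 : h = 0 := t.orth n A' Y hA't hY1 h
  subst hh0; exact hh.trans comp_zero

/-- An object orthogonal to `C[m,n]` has no weights `m, …, n`. -/
lemma mem_without_of_orth (w : WeightStructure C) (t : TStructure C)
    (adj : w.ge 0 = t.ge 0) {m n : ℤ} (hmn : m ≤ n) {M : C}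
    (h : ∀ Y : C, Y ∈ t.le n → Y ∈ t.ge m → ∀ f : M ⟶ Y, f = 0) :
    M ∈ w.without m n := by
  obtain ⟨A, A', x, x', δ₁, hT1, hA, hA'⟩ := w.decomp M n
  obtain ⟨B, B', y', y, δ₂, hT2, hB, hB'⟩ := w.decomp M (m - 1)
  refine ⟨A, A', B, B', x, x', y', y, ⟨⟨δ₁, hT1⟩, hA, hA'⟩, ⟨⟨δ₂, hT2⟩, hB, hB'⟩, ?_⟩
  rw [Category.id_comp]
  have hB'm : B' ∈ t.ge m := by
    rw [← adj_ge_eq w t adj]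
    have : m - 1 + 1 = m := by omega
    rwa [this] at hB'
  obtain ⟨A'', B'', u, v, δt, hTt, hA'', hB''le⟩ := t.decomp B' n
  have hB''ge : B'' ∈ t.ge m := by
    have := t.ge_ext (Triangle.mk u v δt).rotate (rot_of_distTriang _ hTt)
      hB'm (t.ge_anti' (by omega) (t.ge_shift (n + 1) 1 A'' hA''))
    exact this
  have hyv : y ≫ v = 0 := h B'' hB''le hB''ge (y ≫ v)
  obtain ⟨s, hs⟩ : ∃ s : M ⟶ A'', y = s ≫ u := Triangle.coyoneda_exact₂ _ hTt y hyv
  have hA''w : A'' ∈ w.ge (n + 1) := by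
    rw [adj_ge_eq w t adj]
    exact hA''
  have hxs : x ≫ s = 0 := w.orth n A A'' hA hA''w (x ≫ s)
  have : x ≫ y = (x ≫ s) ≫ u := by rw [hs]; exact (Category.assoc _ _ _).symm
  rw [this, hxs, zero_comp]

end AuxiliaryLemmas

/-- For adjacent `w` and `t`, the pair `(C_{w ∉ [m,n]}, C[m,n])` is a torsion
theory. -/
theorem stmt10 (w : WeightStructure C) (t : TStructure C)
    (adj : w.ge 0 = t.ge 0) (m n : ℤ) (hmn : m ≤ n) :
    rightOrth (w.without m n) = t.le n ∩ t.ge m ∧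
    leftOrth (t.le n ∩ t.ge m) = w.without m n ∧
    ∀ M : C, ∃ (L R : C) (a : L ⟶ M) (b : M ⟶ R) (δ : R ⟶ L⟦(1 : ℤ)⟧),
      (Triangle.mk a b δ ∈ distTriang C) ∧ L ∈ w.without m n ∧
        R ∈ t.le n ∩ t.ge m := by
  have key₁ : rightOrth (w.without m n) = t.le n ∩ t.ge m := by
    ext Y
    constructor
    · intro hY
      constructor
      · apply t.mem_le_of_orth
        intro X hX f
        have hXw : X ∈ w.ge (n + 1) := by
          rw [adj_ge_eq w t adj]
          exact hX
        exact hY X (w.mem_without_of_ge hXw) f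
      · rw [← adj_ge_eq w t adj]
        apply w.mem_ge_of_orth
        intro Z hZ f
        exact hY Z (w.mem_without_of_le hZ) f
    · rintro ⟨hY1, hY2⟩ X hX f
      exact without_hom_zero w t adj hX hY1 hY2 f
  have key₂ : leftOrth (t.le n ∩ t.ge m) = w.without m n := by
    ext M
    constructor
    · intro hM
      exact mem_without_of_orth w t adj hmn (fun Y h1 h2 f => hM Y ⟨h1, h2⟩ f)
    · intro hM Y hY f
      exact without_hom_zero w t adj hM hY.1 hY.2 f
  refine ⟨key₁, key₂, ?_⟩
  intro M
  obtain ⟨B, B', j, π, δw, hTw, hB, hB'⟩ := w.decomp M (m - 1)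
  have hB'm : B' ∈ t.ge m := by
    rw [← adj_ge_eq w t adj]
    have : m - 1 + 1 = m := by omega
    rwa [this] at hB'
  obtain ⟨A'', B'', u, v, δt, hTt, hA'', hB''le⟩ := t.decomp B' n
  have hB''ge : B'' ∈ t.ge m :=
    t.ge_ext (Triangle.mk u v δt).rotate (rot_of_distTriang _ hTt)
      hB'm (t.ge_anti' (by omega) (t.ge_shift (n + 1) 1 A'' hA''))
  obtain ⟨L, a, θ, hT0⟩ := distinguished_cocone_triangle₁ (π ≫ v)
  refine ⟨L, B'', a, π ≫ v, θ, hT0, ?_, hB''le, hB''ge⟩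
  apply mem_without_of_orth w t adj hmn
  intro Y hYle hYge f
  have hYw : Y ∈ w.ge (m - 1 + 1) := by
    rw [show m - 1 + 1 = m by omega, adj_ge_eq w t adj]
    exact hYge
  -- every map `M ⟶ Y` composes to zero with `a`
  have hfac : ∀ g : M ⟶ Y, a ≫ g = 0 := by
    intro g
    have hjg : j ≫ g = 0 := w.orth (m - 1) B Y hB hYw _
    obtain ⟨e, he⟩ : ∃ e : B' ⟶ Y, g = π ≫ e := Triangle.yoneda_exact₂ _ hTw g hjg
    have hue : u ≫ e = 0 := t.orth n A'' Y hA'' hYle _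
    obtain ⟨e', he'⟩ : ∃ e' : B'' ⟶ Y, e = v ≫ e' := Triangle.yoneda_exact₂ _ hTt e hue
    have h0 : a ≫ π ≫ v = 0 := comp_distTriang_mor_zero₁₂ _ hT0
    rw [he, he']
    change a ≫ π ≫ v ≫ e' = 0
    simp only [← Category.assoc]
    rw [← Category.assoc] at h0
    rw [h0, zero_comp]
  -- the key diagram chase
  have hbase : (π ≫ v) ≫ θ = 0 := comp_distTriang_mor_zero₂₃ _ hT0
  have hξv : v ≫ θ ≫ f⟦(1 : ℤ)⟧' = 0 := by
    have hπ : π ≫ v ≫ θ ≫ f⟦(1 : ℤ)⟧' = 0 := by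
      simp only [← Category.assoc]
      rw [hbase, zero_comp]
    obtain ⟨η, hη⟩ := Triangle.yoneda_exact₃ _ hTw (v ≫ θ ≫ f⟦(1 : ℤ)⟧') hπ
    have hη0 : η = 0 := by
      have h00 : (shiftFunctor C (1 : ℤ)).preimage η = 0 :=
        w.orth (m - 1) B Y hB hYw _
      rw [← (shiftFunctor C (1 : ℤ)).map_preimage η, h00, Functor.map_zero]
    subst hη0; exact hη.trans comp_zero
  have hξ : θ ≫ f⟦(1 : ℤ)⟧' = 0 := by
    obtain ⟨ν, hν⟩ := Triangle.yoneda_exact₃ _ hTt (θ ≫ f⟦(1 : ℤ)⟧') hξv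
    have hν0 : ν = 0 := by
      have h00 : (shiftFunctor C (1 : ℤ)).preimage ν = 0 :=
        t.orth n A'' Y hA'' hYle _
      rw [← (shiftFunctor C (1 : ℤ)).map_preimage ν, h00, Functor.map_zero]
    subst hν0; exact hν.trans comp_zero
  obtain ⟨h', hh'⟩ : ∃ h' : M⟦(1 : ℤ)⟧ ⟶ Y⟦(1 : ℤ)⟧, f⟦(1 : ℤ)⟧' = (-(a⟦(1 : ℤ)⟧')) ≫ h' := by
    obtain ⟨g, hg⟩ := Triangle.yoneda_exact₃ _ (rot_of_distTriang _ hT0)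
      (f⟦(1 : ℤ)⟧') (by exact hξ)
    exact ⟨g, hg⟩
  have hah : a ≫ (shiftFunctor C (1 : ℤ)).preimage h' = 0 := hfac _
  have hmap : f⟦(1 : ℤ)⟧' = 0 := by
    rw [hh']
    rw [Preadditive.neg_comp, ← (shiftFunctor C (1 : ℤ)).map_preimage h', ← Functor.map_comp,
      hah, Functor.map_zero, neg_zero]
  apply (shiftFunctor C (1 : ℤ)).map_injective
  rw [hmap, Functor.map_zero]
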